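/- Let β and γ be nonempty finite types and let p be a pmf on β × γ (the joint law of (Y,Z)) with marginals p_Y and p_Z. For each z ∈ γ let q(·|z) be a pmf on β with q(y|z) > 0 whenever p(y,z) > 0. Then the variational (Barber–Agakov) lower bound holds: I(p) ≥ H(Y) + ∑_{(y,z)} p(y,z) * Real.log (q(y|z)), where I(p) = KL(p ‖ p_Y ⊗ p_Z) is the mutual information of p and H(Y) = −∑_y p_Y y * Real.log (p_Y y) is the Shannon entropy of the first marginal. -/

import Mathlib

open Finset

/-- `p` is a probability mass function on the finite type `α`. -/
def IsPMF {α : Type*} [Fintype α] (p : α → ℝ) : Prop :=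
  (∀ a, 0 ≤ p a) ∧ ∑ a, p a = 1

/-- Kullback–Leibler divergence between pmfs on a finite type
(the convention `0 * log 0 = 0` holds automatically). -/
noncomputable def KL {α : Type*} [Fintype α] (p q : α → ℝ) : ℝ :=
  ∑ a, p a * Real.log (p a / q a)

/-- First marginal of a pmf on a product type. -/
def margFst {α β : Type*} [Fintype β] (p : α × β → ℝ) : α → ℝ :=
  fun a => ∑ b, p (a, b)

/-- Second marginal of a pmf on a product type. -/
def margSnd {α β : Type*} [Fintype α] (p : α × β → ℝ) : β → ℝ :=
  fun b => ∑ a, p (a, b)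

/-- Product pmf `(q ⊗ r) (a, b) = q a * r b`. -/
def prodPMF {α β : Type*} (q : α → ℝ) (r : β → ℝ) : α × β → ℝ :=
  fun x => q x.1 * r x.2

/-- Mutual information `I(p) = KL(p ‖ p₁ ⊗ p₂)`. -/
noncomputable def mutualInfo {α β : Type*} [Fintype α] [Fintype β] (p : α × β → ℝ) : ℝ :=
  KL p (prodPMF (margFst p) (margSnd p))


/-- **Variational (Barber–Agakov) lower bound on mutual information.**
For any conditional decoder `q(·|z)` positive on the support of the joint pmf `p`,
`I(p) ≥ H(Y) + 𝔼_{(y,z)∼p} log q(y|z)`. -/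
theorem barber_agakov_bound {β γ : Type*} [Fintype β] [Fintype γ]
    [Nonempty β] [Nonempty γ]
    (p : β × γ → ℝ) (hp : IsPMF p)
    (q : γ → β → ℝ) (hq : ∀ z, IsPMF (q z))
    (hq_pos : ∀ y z, 0 < p (y, z) → 0 < q z y) :
    (-∑ y, margFst p y * Real.log (margFst p y))
        + ∑ x : β × γ, p x * Real.log (q x.2 x.1)
      ≤ mutualInfo p := by

  classical
  have hpnn := hp.1
  -- r is the pmf p_Z(z) * q(y|z)
  set r : β × γ → ℝ := fun x => margSnd p x.2 * q x.2 x.1 with hr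
  have hrnn : ∀ x, 0 ≤ r x := fun x =>
    mul_nonneg (Finset.sum_nonneg fun y _ => hpnn _) ((hq x.2).1 x.1)
  have hrsum : ∑ x : β × γ, r x = 1 := by
    rw [Fintype.sum_prod_type, Finset.sum_comm]
    have : ∀ z : γ, ∑ y : β, r (y, z) = margSnd p z := by
      intro z
      simp only [hr, ← Finset.mul_sum, (hq z).2, mul_one]
    calc ∑ z : γ, ∑ y : β, r (y, z) = ∑ z : γ, margSnd p z := by
          exact Finset.sum_congr rfl fun z _ => this z
      _ = ∑ z : γ, ∑ y : β, p (y, z) := rfl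
      _ = 1 := by rw [← Finset.sum_comm, ← Fintype.sum_prod_type]; exact hp.2
  -- positivity of marginals on the support of p
  have hmf : ∀ x : β × γ, 0 < p x → 0 < margFst p x.1 := by
    intro x hx
    exact lt_of_lt_of_le hx (Finset.single_le_sum (fun z _ => hpnn (x.1, z)) (Finset.mem_univ x.2))
  have hms : ∀ x : β × γ, 0 < p x → 0 < margSnd p x.2 := by
    intro x hx
    exact lt_of_lt_of_le hx (Finset.single_le_sum (fun y _ => hpnn (y, x.2)) (Finset.mem_univ x.1))
  -- KL(p ‖ r) ≥ 0 via log x ≥ 1 - 1/x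
  have key : 0 ≤ ∑ x : β × γ, p x * Real.log (p x / r x) := by
    have hterm : ∀ x : β × γ, p x - r x ≤ p x * Real.log (p x / r x) := by
      intro x
      rcases eq_or_lt_of_le (hpnn x) with h0 | hpos
      · simp [← h0, hrnn x]
      · have hrp : 0 < r x := mul_pos (hms x hpos) (hq_pos x.1 x.2 (by
          have : (x.1, x.2) = x := Prod.mk.eta
          rw [this]; exact hpos))
        have hlog : 1 - r x / p x ≤ Real.log (p x / r x) := by
          have := Real.one_sub_inv_le_log_of_pos (div_pos hpos hrp)
          rwa [inv_div] at this
        calc p x - r x = p x * (1 - r x / p x) := by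
              field_simp
          _ ≤ p x * Real.log (p x / r x) := by
              exact mul_le_mul_of_nonneg_left hlog (le_of_lt hpos)
    calc (0:ℝ) = 1 - 1 := by ring
      _ = ∑ x : β × γ, p x - ∑ x : β × γ, r x := by rw [hp.2, hrsum]
      _ = ∑ x : β × γ, (p x - r x) := (Finset.sum_sub_distrib _ _).symm
      _ ≤ ∑ x : β × γ, p x * Real.log (p x / r x) :=
          Finset.sum_le_sum fun x _ => hterm x
  -- entropy as a sum over pairs
  have hent : ∑ y, margFst p y * Real.log (margFst p y)
      = ∑ x : β × γ, p x * Real.log (margFst p x.1) := by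
    rw [Fintype.sum_prod_type]
    refine Finset.sum_congr rfl fun y _ => ?_
    simp only [margFst]
    rw [Finset.sum_mul]
  -- termwise identity
  have hsplit : ∀ x : β × γ,
      p x * Real.log (p x / r x)
        = p x * Real.log (p x / (margFst p x.1 * margSnd p x.2))
          + p x * Real.log (margFst p x.1) - p x * Real.log (q x.2 x.1) := by
    intro x
    rcases eq_or_lt_of_le (hpnn x) with h0 | hpos
    · simp [← h0]
    · have h1 := hmf x hpos
      have h2 := hms x hpos
      have h3 : 0 < q x.2 x.1 := hq_pos x.1 x.2 (by rwa [Prod.mk.eta])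
      rw [hr]
      rw [Real.log_div (ne_of_gt hpos) (by positivity),
          Real.log_div (ne_of_gt hpos) (by positivity),
          Real.log_mul (ne_of_gt h2) (ne_of_gt h3),
          Real.log_mul (ne_of_gt h1) (ne_of_gt h2)]
      ring
  -- conclude
  have hsum : ∑ x : β × γ, p x * Real.log (p x / r x)
      = mutualInfo p - ((-∑ y, margFst p y * Real.log (margFst p y))
          + ∑ x : β × γ, p x * Real.log (q x.2 x.1)) := by
    rw [hent, mutualInfo, KL]
    rw [Finset.sum_congr rfl fun x _ => hsplit x]
    rw [Finset.sum_sub_distrib, Finset.sum_add_distrib]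
    simp only [prodPMF]
    ring
  linarith [key, hsum.symm ▸ key]
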